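/- (Energy-dissipation balance law with local densities for two-time-level schemes.) Let d ≥ 1, p, r ∈ ℕ^d, and let a_{ℓ,σ} ∈ ℝ for −r ≤ ℓ ≤ p and σ = 0, 1, 2. Define bounded operators Q₀, Q₁, Q₂ on ℓ²(ℤ^d;ℝ) by (Q_σ v)(j) := Σ_{−r≤ℓ≤p} a_{ℓ,σ}·v(j+ℓ). Define, for x, y ∈ ℓ²(ℤ^d;ℝ): E(x,y) := 2‖Q₂y‖² + 2⟨Q₂y, Q₁x⟩ + ‖Q₂x‖² + ‖Q₀x‖² and D(x,y) := ‖Q₂y‖² − ‖Q₀y‖² + 2⟨Q₂y, Q₁x⟩ − 2⟨Q₁y, Q₀x⟩ + ‖Q₂x‖² − ‖Q₀x‖². Then for every sequence v : ℕ → ℓ²(ℤ^d;ℝ) and every n ∈ ℕ, setting Lv(n) := Q₀v(n) + Q₁v(n+1) + Q₂v(n+2) and Mv(n) := Q₁v(n+1) + 2Q₂v(n+2), one has 2·⟨Mv(n), Lv(n)⟩ = 2·‖Lv(n)‖² + E(v(n+1),v(n+2)) − E(v(n),v(n+1)) + D(v(n),v(n+1)). -/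
import Mathlib


/-- The finite difference operator `(Q_σ v)(j) = Σ_{−r≤ℓ≤p} a_{ℓ,σ} v(j+ℓ)` acting on
functions on `ℤ^d`. -/
noncomputable def Qact (d : ℕ) (p r : Fin d → ℕ) (a : (Fin d → ℤ) → ℕ → ℝ) (σ : ℕ)
    (v : (Fin d → ℤ) → ℝ) (j : Fin d → ℤ) : ℝ :=
  ∑ ℓ ∈ Finset.Icc (fun i => -(r i : ℤ)) (fun i => (p i : ℤ)), a ℓ σ * v (j + ℓ)

/-- The `ℓ²(ℤ^d;ℝ)` inner product `⟨u,v⟩ = Σ_j u(j) v(j)`. -/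
noncomputable def l2inner (d : ℕ) (u v : (Fin d → ℤ) → ℝ) : ℝ := ∑' j : Fin d → ℤ, u j * v j

/-- The squared `ℓ²(ℤ^d;ℝ)` norm `‖v‖² = Σ_j v(j)²`. -/
noncomputable def l2normSq (d : ℕ) (v : (Fin d → ℤ) → ℝ) : ℝ := ∑' j : Fin d → ℤ, (v j) ^ 2

/-- The energy functional `E(x,y) = 2‖Q₂y‖² + 2⟨Q₂y,Q₁x⟩ + ‖Q₂x‖² + ‖Q₀x‖²`. -/
noncomputable def Efun (d : ℕ) (p r : Fin d → ℕ) (a : (Fin d → ℤ) → ℕ → ℝ)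
    (x y : (Fin d → ℤ) → ℝ) : ℝ :=
  2 * l2normSq d (Qact d p r a 2 y) + 2 * l2inner d (Qact d p r a 2 y) (Qact d p r a 1 x)
    + l2normSq d (Qact d p r a 2 x) + l2normSq d (Qact d p r a 0 x)

/-- The dissipation functional
`D(x,y) = ‖Q₂y‖² − ‖Q₀y‖² + 2⟨Q₂y,Q₁x⟩ − 2⟨Q₁y,Q₀x⟩ + ‖Q₂x‖² − ‖Q₀x‖²`. -/
noncomputable def Dfun (d : ℕ) (p r : Fin d → ℕ) (a : (Fin d → ℤ) → ℕ → ℝ)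
    (x y : (Fin d → ℤ) → ℝ) : ℝ :=
  l2normSq d (Qact d p r a 2 y) - l2normSq d (Qact d p r a 0 y)
    + 2 * l2inner d (Qact d p r a 2 y) (Qact d p r a 1 x)
    - 2 * l2inner d (Qact d p r a 1 y) (Qact d p r a 0 x)
    + l2normSq d (Qact d p r a 2 x) - l2normSq d (Qact d p r a 0 x)

/-- Product of two square-summable functions is summable. -/
lemma summable_mul_of_sq {ι : Type*} {u w : ι → ℝ}
    (hu : Summable fun j => u j ^ 2) (hw : Summable fun j => w j ^ 2) :
    Summable fun j => u j * w j := by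
  refine Summable.of_abs ?_
  refine Summable.of_nonneg_of_le (fun j => abs_nonneg _) (fun j => ?_)
    (((hu.add hw).mul_left (1 / 2)))
  have h1 : |u j * w j| = |u j| * |w j| := abs_mul _ _
  nlinarith [sq_nonneg (|u j| - |w j|), sq_abs (u j), sq_abs (w j), abs_nonneg (u j),
    abs_nonneg (w j)]

/-- `Q_σ` maps square-summable functions to square-summable functions. -/
lemma summable_sq_Qact (d : ℕ) (p r : Fin d → ℕ) (a : (Fin d → ℤ) → ℕ → ℝ) (σ : ℕ)
    {w : (Fin d → ℤ) → ℝ} (hw : Summable fun j => w j ^ 2) :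
    Summable fun j => (Qact d p r a σ w j) ^ 2 := by
  classical
  set S := Finset.Icc (fun i : Fin d => -(r i : ℤ)) (fun i : Fin d => (p i : ℤ)) with hS
  have hterm : ∀ ℓ : Fin d → ℤ, Summable fun j : Fin d → ℤ => (a ℓ σ * w (j + ℓ)) ^ 2 := by
    intro ℓ
    have h1 : Summable fun j : Fin d → ℤ => w (j + ℓ) ^ 2 :=
      ((Equiv.addRight ℓ).summable_iff (f := fun j : Fin d → ℤ => w j ^ 2)).mpr hw
    have h2 := h1.mul_left ((a ℓ σ) ^ 2)
    refine h2.congr fun j => ?_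
    ring
  have hsum : Summable fun j : Fin d → ℤ => ∑ ℓ ∈ S, (a ℓ σ * w (j + ℓ)) ^ 2 :=
    summable_sum fun ℓ _ => hterm ℓ
  refine Summable.of_nonneg_of_le (fun j => sq_nonneg _) (fun j => ?_)
    (hsum.mul_left (S.card : ℝ))
  exact sq_sum_le_card_mul_sum_sq

/-- Sum of two square-summable functions is square-summable. -/
lemma summable_sq_add {ι : Type*} {u w : ι → ℝ}
    (hu : Summable fun j => u j ^ 2) (hw : Summable fun j => w j ^ 2) :
    Summable fun j => (u j + w j) ^ 2 := by
  have h := (hu.add ((summable_mul_of_sq hu hw).mul_left 2)).add hw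
  refine h.congr fun j => ?_
  ring

/-- the energy-dissipation balance law with local densities for
two-time-level schemes: with `Lv(n) = Q₀v(n) + Q₁v(n+1) + Q₂v(n+2)` and
`Mv(n) = Q₁v(n+1) + 2Q₂v(n+2)`, one has
`2⟨Mv(n),Lv(n)⟩ = 2‖Lv(n)‖² + E(v(n+1),v(n+2)) − E(v(n),v(n+1)) + D(v(n),v(n+1))`. -/
theorem stmt_15 (d : ℕ) (hd : 1 ≤ d) (p r : Fin d → ℕ) (a : (Fin d → ℤ) → ℕ → ℝ)
    (v : ℕ → (Fin d → ℤ) → ℝ) (hv : ∀ n, Summable fun j : Fin d → ℤ => (v n j) ^ 2)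
    (n : ℕ) :
    2 * l2inner d
        (fun j => Qact d p r a 1 (v (n + 1)) j + 2 * Qact d p r a 2 (v (n + 2)) j)
        (fun j => Qact d p r a 0 (v n) j + Qact d p r a 1 (v (n + 1)) j
          + Qact d p r a 2 (v (n + 2)) j)
    = 2 * l2normSq d (fun j => Qact d p r a 0 (v n) j + Qact d p r a 1 (v (n + 1)) j
          + Qact d p r a 2 (v (n + 2)) j)
      + Efun d p r a (v (n + 1)) (v (n + 2)) - Efun d p r a (v n) (v (n + 1))
      + Dfun d p r a (v n) (v (n + 1)) := by
  classical
  have SQ : ∀ σ m : ℕ, Summable fun j => (Qact d p r a σ (v m) j) ^ 2 :=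
    fun σ m => summable_sq_Qact d p r a σ (hv m)
  have P : ∀ σ m τ k : ℕ,
      Summable fun j => Qact d p r a σ (v m) j * Qact d p r a τ (v k) j :=
    fun σ m τ k => summable_mul_of_sq (SQ σ m) (SQ τ k)
  -- summability of the square of L
  have hLsq : Summable fun j => (Qact d p r a 0 (v n) j + Qact d p r a 1 (v (n + 1)) j
      + Qact d p r a 2 (v (n + 2)) j) ^ 2 :=
    summable_sq_add (summable_sq_add (SQ 0 n) (SQ 1 (n + 1))) (SQ 2 (n + 2))
  -- abbreviations for the (scaled) atomic summable functions
  have sT1 : Summable fun j => 2 * (Qact d p r a 0 (v n) j + Qact d p r a 1 (v (n + 1)) j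
      + Qact d p r a 2 (v (n + 2)) j) ^ 2 := hLsq.mul_left 2
  have sT2 : Summable fun j => 2 * Qact d p r a 2 (v (n + 2)) j ^ 2 :=
    (SQ 2 (n + 2)).mul_left 2
  have sT3 : Summable fun j =>
      2 * (Qact d p r a 2 (v (n + 2)) j * Qact d p r a 1 (v (n + 1)) j) :=
    (P 2 (n + 2) 1 (n + 1)).mul_left 2
  have sT4 : Summable fun j => Qact d p r a 2 (v (n + 1)) j ^ 2 := SQ 2 (n + 1)
  have sT5 : Summable fun j => Qact d p r a 0 (v (n + 1)) j ^ 2 := SQ 0 (n + 1)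
  have sT6 : Summable fun j => 2 * Qact d p r a 2 (v (n + 1)) j ^ 2 :=
    (SQ 2 (n + 1)).mul_left 2
  have sT7 : Summable fun j =>
      2 * (Qact d p r a 2 (v (n + 1)) j * Qact d p r a 1 (v n) j) :=
    (P 2 (n + 1) 1 n).mul_left 2
  have sT8 : Summable fun j => Qact d p r a 2 (v n) j ^ 2 := SQ 2 n
  have sT9 : Summable fun j => Qact d p r a 0 (v n) j ^ 2 := SQ 0 n
  have sT13 : Summable fun j =>
      2 * (Qact d p r a 1 (v (n + 1)) j * Qact d p r a 0 (v n) j) :=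
    (P 1 (n + 1) 0 n).mul_left 2
  -- composite summability facts
  have sE2 : Summable fun j =>
      2 * Qact d p r a 2 (v (n + 2)) j ^ 2
        + 2 * (Qact d p r a 2 (v (n + 2)) j * Qact d p r a 1 (v (n + 1)) j)
        + Qact d p r a 2 (v (n + 1)) j ^ 2 + Qact d p r a 0 (v (n + 1)) j ^ 2 :=
    ((sT2.add sT3).add sT4).add sT5
  have sE1 : Summable fun j =>
      2 * Qact d p r a 2 (v (n + 1)) j ^ 2
        + 2 * (Qact d p r a 2 (v (n + 1)) j * Qact d p r a 1 (v n) j)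
        + Qact d p r a 2 (v n) j ^ 2 + Qact d p r a 0 (v n) j ^ 2 :=
    ((sT6.add sT7).add sT8).add sT9
  have sD : Summable fun j =>
      Qact d p r a 2 (v (n + 1)) j ^ 2 - Qact d p r a 0 (v (n + 1)) j ^ 2
        + 2 * (Qact d p r a 2 (v (n + 1)) j * Qact d p r a 1 (v n) j)
        - 2 * (Qact d p r a 1 (v (n + 1)) j * Qact d p r a 0 (v n) j)
        + Qact d p r a 2 (v n) j ^ 2 - Qact d p r a 0 (v n) j ^ 2 :=
    ((((sT4.sub sT5).add sT7).sub sT13).add sT8).sub sT9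
  -- rewrite the right-hand side as a single tsum
  unfold Efun Dfun l2inner l2normSq
  rw [← tsum_mul_left, ← tsum_mul_left, ← tsum_mul_left, ← tsum_mul_left, ← tsum_mul_left,
    ← tsum_mul_left, ← tsum_mul_left,
    ← Summable.tsum_add sT2 sT3, ← Summable.tsum_add (sT2.add sT3) sT4, ← Summable.tsum_add ((sT2.add sT3).add sT4) sT5,
    ← Summable.tsum_add sT6 sT7, ← Summable.tsum_add (sT6.add sT7) sT8, ← Summable.tsum_add ((sT6.add sT7).add sT8) sT9,
    ← Summable.tsum_sub sT4 sT5, ← Summable.tsum_add (sT4.sub sT5) sT7,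
    ← Summable.tsum_sub ((sT4.sub sT5).add sT7) sT13,
    ← Summable.tsum_add (((sT4.sub sT5).add sT7).sub sT13) sT8,
    ← Summable.tsum_sub ((((sT4.sub sT5).add sT7).sub sT13).add sT8) sT9,
    ← Summable.tsum_add sT1 sE2, ← Summable.tsum_sub (sT1.add sE2) sE1, ← Summable.tsum_add ((sT1.add sE2).sub sE1) sD]
  exact tsum_congr fun j => by ring
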